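/- In the unique formal singular solution R(Z) = Σ_k R_k Z^(-k), θ(Z) = Σ_k θ_k Z^(-k) of the system dR/dZ = -tan θ + R/(2Z), dθ/dZ = (n-1)(1/cos θ - 1/R), the coefficients satisfy R_k = 0 for all odd k and θ_k = 0 for all even k. -/

import Mathlib

open Real Filter Asymptotics Topology

private lemma csin_an (z : ℂ) : AnalyticAt ℂ Complex.sin z := by
  have : Complex.sin = fun z => (Complex.exp (-z * Complex.I) - Complex.exp (z * Complex.I)) * Complex.I / 2 := by
    funext z; rw [Complex.sin]
  rw [this]
  exact ((((analyticAt_cexp.comp ((analyticAt_id.neg).mul analyticAt_const)).sub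
    (analyticAt_cexp.comp (analyticAt_id.mul analyticAt_const))).mul analyticAt_const).div
    analyticAt_const (by norm_num))

private lemma ccos_an (z : ℂ) : AnalyticAt ℂ Complex.cos z := by
  have : Complex.cos = fun z => (Complex.exp (z * Complex.I) + Complex.exp (-z * Complex.I)) / 2 := by
    funext z; rw [Complex.cos]
  rw [this]
  exact (((analyticAt_cexp.comp (analyticAt_id.mul analyticAt_const)).add
    (analyticAt_cexp.comp ((analyticAt_id.neg).mul analyticAt_const))).div
    analyticAt_const (by norm_num))

private lemma rsin_an (x : ℝ) : AnalyticAt ℝ Real.sin x := by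
  have : Real.sin = fun x : ℝ => (Complex.sin x).re := by funext x; rw [Real.sin]
  rw [this]
  exact Complex.reCLM.analyticAt _ |>.comp (((csin_an _).restrictScalars).comp
    (Complex.ofRealCLM.analyticAt x))

private lemma rcos_an (x : ℝ) : AnalyticAt ℝ Real.cos x := by
  have : Real.cos = fun x : ℝ => (Complex.cos x).re := by funext x; rw [Real.cos]
  rw [this]
  exact Complex.reCLM.analyticAt _ |>.comp (((ccos_an _).restrictScalars).comp
    (Complex.ofRealCLM.analyticAt x))

private lemma rtan_an {t : ℝ} (h : Real.cos t ≠ 0) : AnalyticAt ℝ Real.tan t := by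
  have : Real.tan = fun x => Real.sin x / Real.cos x := funext fun x => Real.tan_eq_sin_div_cos x
  rw [this]; exact (rsin_an t).div (rcos_an t) h

/-- one-sided little-o of an analytic function extends to a two-sided one -/
private lemma onesided (f : ℝ → ℝ) (k : ℕ) (hf : AnalyticAt ℝ f 0)
    (ho : f =o[𝓝[>] (0:ℝ)] fun ε => ε ^ k) : f =o[𝓝 (0:ℝ)] fun ε => ε ^ k := by
  rcases eq_or_ne (analyticOrderAt f 0) ⊤ with htop | hne
  · have hz : ∀ᶠ z in 𝓝 (0:ℝ), f z = 0 := analyticOrderAt_eq_top.mp htop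
    exact (isLittleO_zero _ _).congr' (by filter_upwards [hz] with z h using h.symm) EventuallyEq.rfl
  · lift analyticOrderAt f 0 to ℕ using hne with m hm
    obtain ⟨g, hg, hg0, heq⟩ := (hf.analyticOrderAt_eq_natCast (n := m)).mp hm.symm
    have hgc : ContinuousAt g 0 := hg.continuousAt
    have hklt : k < m := by
      by_contra hle
      push_neg at hle
      have h1 : Tendsto (fun ε => f ε / ε ^ m) (𝓝[>] (0:ℝ)) (𝓝 0) := by
        have : f =o[𝓝[>] (0:ℝ)] fun ε => ε ^ m := by
          refine ho.trans_isBigO (IsBigO.of_bound 1 ?_)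
          filter_upwards [Ioo_mem_nhdsGT_of_mem (by norm_num : (0:ℝ) ∈ Set.Ico 0 1)] with x hx
          simp only [one_mul, norm_pow, Real.norm_eq_abs]
          exact pow_le_pow_of_le_one (abs_nonneg _) (by rw [abs_of_pos hx.1]; exact hx.2.le) hle
        exact this.tendsto_div_nhds_zero
      have h2 : Tendsto g (𝓝[>] (0:ℝ)) (𝓝 (g 0)) := hgc.continuousWithinAt.tendsto
      have h3 : Tendsto g (𝓝[>] (0:ℝ)) (𝓝 0) := by
        refine h1.congr' ?_
        filter_upwards [heq.filter_mono nhdsWithin_le_nhds, self_mem_nhdsWithin] with x hx hx0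
        rw [hx]
        simp only [sub_zero, smul_eq_mul]
        rw [mul_comm, mul_div_assoc, div_self (pow_ne_zero _ (ne_of_gt hx0)), mul_one]
      exact hg0 (tendsto_nhds_unique h2 h3)
    have key : f =ᶠ[𝓝 (0:ℝ)] fun ε => ε ^ k * (ε ^ (m - k) * g ε) := by
      filter_upwards [heq] with x hx
      rw [hx]; simp only [sub_zero, smul_eq_mul]
      rw [← mul_assoc, ← pow_add]
      congr 2; omega
    have hten : Tendsto (fun ε : ℝ => ε ^ (m - k) * g ε) (𝓝 (0:ℝ)) (𝓝 0) := by
      have : Tendsto (fun ε : ℝ => ε ^ (m - k) * g ε) (𝓝 (0:ℝ)) (𝓝 (0 ^ (m-k) * g 0)) :=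
        ((continuousAt_id.pow _).mul hgc).tendsto
      rwa [zero_pow (by omega), zero_mul] at this
    have : (fun ε : ℝ => ε ^ k * (ε ^ (m - k) * g ε)) =o[𝓝 (0:ℝ)] fun ε => ε ^ k * 1 :=
      (isBigO_refl _ _).mul_isLittleO (isLittleO_one_iff ℝ |>.mpr hten)
    refine (this.congr' key.symm ?_); filter_upwards with x; rw [mul_one]

/-- transfer little-o at atTop in `1/Z` to little-o at `0⁺`. -/
private lemma transfer_o (f : ℝ → ℝ) (k : ℕ)
    (h : (fun Z : ℝ => f Z⁻¹) =o[atTop] fun Z : ℝ => Z ^ (-(k:ℤ))) :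
    f =o[𝓝[>] (0:ℝ)] fun ε => ε ^ k := by
  have := h.comp_tendsto tendsto_inv_nhdsGT_zero
  refine this.congr' ?_ ?_
  · filter_upwards with x
    simp [Function.comp, inv_inv]
  · filter_upwards with x
    show (x⁻¹) ^ (-(k:ℤ)) = x ^ k
    rw [inv_zpow, zpow_neg, inv_inv, zpow_natCast]

private lemma tendsto_inv_atBot_zero' : Tendsto (fun Z : ℝ => Z⁻¹) atBot (𝓝 0) := by
  rw [tendsto_zero_iff_abs_tendsto_zero]
  have : Tendsto (fun Z : ℝ => |Z|⁻¹) atBot (𝓝 0) :=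
    (tendsto_abs_atBot_atTop).inv_tendsto_atTop
  exact this.congr fun x => (abs_inv x).symm

/-- transfer two-sided little-o at `0` to little-o at atBot in `1/Z`. -/
private lemma transfer_back (f : ℝ → ℝ) (k : ℕ) (h : f =o[𝓝 (0:ℝ)] fun ε => ε ^ k) :
    (fun Z : ℝ => f Z⁻¹) =o[atBot] fun Z : ℝ => Z ^ (-(k:ℤ)) := by
  have := h.comp_tendsto tendsto_inv_atBot_zero'
  refine this.congr' EventuallyEq.rfl ?_
  filter_upwards with x
  show (x⁻¹) ^ k = x ^ (-(k:ℤ))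
  rw [inv_pow, zpow_neg, zpow_natCast]

private lemma sum_tendsto (a : ℕ → ℝ) (k : ℕ) :
    Tendsto (fun Z : ℝ => ∑ j ∈ Finset.range (k+1), a j * Z ^ (-(j:ℤ))) atTop
      (𝓝 (a 0)) := by
  have : Tendsto (fun Z : ℝ => ∑ j ∈ Finset.range (k+1), a j * Z ^ (-(j:ℤ))) atTop
      (𝓝 (∑ j ∈ Finset.range (k+1), if j = 0 then a 0 else 0)) := by
    refine tendsto_finset_sum _ fun j hj => ?_
    rcases Nat.eq_zero_or_pos j with rfl | hjpos
    · simp only [if_pos rfl]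
      have : (fun Z : ℝ => a 0 * Z ^ (-(0:ℕ):ℤ)) = fun _ => a 0 := by
        funext Z; simp
      rw [this]; exact tendsto_const_nhds
    · simp only [if_neg (Nat.pos_iff_ne_zero.mp hjpos)]
      have := tendsto_zpow_atTop_zero (𝕜 := ℝ) (n := -(j:ℤ)) (by omega)
      have := this.const_mul (a j)
      simpa using this
  simpa using this

private lemma o_mul_tendsto {f : ℝ → ℝ} {m : ℕ}
    (h : f =o[atTop] fun Z : ℝ => Z ^ (-(m:ℤ))) :
    Tendsto (fun Z : ℝ => Z ^ m * f Z) atTop (𝓝 0) := by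
  have := h.tendsto_div_nhds_zero
  refine this.congr fun Z => ?_
  rw [div_eq_mul_inv, zpow_neg, inv_inv, zpow_natCast, mul_comm]

private lemma sinlim (b : ℝ) (m : ℕ) :
    Tendsto (fun Z : ℝ => Z ^ (m+1) * Real.sin (b * Z ^ (-((m+1:ℕ):ℤ)))) atTop (𝓝 b) := by
  rcases eq_or_ne b 0 with rfl | hb
  · simpa using tendsto_const_nhds (α := ℝ) (f := atTop) (a := 0)
  · have hx : Tendsto (fun Z : ℝ => b * Z ^ (-((m+1:ℕ):ℤ))) atTop (𝓝[≠] 0) := by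
      rw [tendsto_nhdsWithin_iff]
      constructor
      · have := (tendsto_zpow_atTop_zero (𝕜 := ℝ) (n := -((m+1:ℕ):ℤ)) (by omega)).const_mul b
        simpa using this
      · filter_upwards [eventually_gt_atTop (0:ℝ)] with Z hZ
        exact mul_ne_zero hb (zpow_ne_zero _ (ne_of_gt hZ))
    have hslope : Tendsto (fun x : ℝ => Real.sin x / x) (𝓝[≠] (0:ℝ)) (𝓝 1) := by
      have h1 := (Real.hasDerivAt_sin 0)
      rw [hasDerivAt_iff_tendsto_slope] at h1
      have : Real.cos 0 = 1 := Real.cos_zero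
      rw [this] at h1
      refine h1.congr' ?_
      filter_upwards [self_mem_nhdsWithin] with x hx
      simp [slope_def_field, Real.sin_zero]
    have := (hslope.comp hx).const_mul b
    rw [mul_one] at this
    refine this.congr' ?_
    filter_upwards [eventually_gt_atTop (0:ℝ)] with Z hZ
    have hZ0 : Z ^ (-((m+1:ℕ):ℤ)) ≠ 0 := zpow_ne_zero _ (ne_of_gt hZ)
    simp only [Function.comp]
    have hzz : (Z:ℝ) ^ (-((m+1:ℕ):ℤ)) = (Z ^ (m+1))⁻¹ := by
      rw [zpow_neg, zpow_natCast]
    rw [hzz]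
    field_simp

/-- `c` is a formal solution of the system, in the sense that for every `k` the
truncation at order `k` of the series `R(Z) = Σ R_j Z^(-j)`, `θ(Z) = Σ θ_j Z^(-j)`
satisfies both equations of the system up to `o(Z^(-k))` as `Z → ∞`. -/
def IsFormalSolution (n : ℕ) (c : ℕ → ℝ × ℝ) : Prop :=
  ∀ k : ℕ,
    ((fun Z : ℝ => (∑ j ∈ Finset.range (k + 1), -(j : ℝ) * (c j).1 * Z ^ (-(j : ℤ) - 1))
        - (-Real.tan (∑ j ∈ Finset.range (k + 1), (c j).2 * Z ^ (-(j : ℤ)))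
            + (∑ j ∈ Finset.range (k + 1), (c j).1 * Z ^ (-(j : ℤ))) / (2 * Z)))
      =o[atTop] fun Z : ℝ => Z ^ (-(k : ℤ))) ∧
    ((fun Z : ℝ => (∑ j ∈ Finset.range (k + 1), -(j : ℝ) * (c j).2 * Z ^ (-(j : ℤ) - 1))
        - ((n : ℝ) - 1) * (1 / Real.cos (∑ j ∈ Finset.range (k + 1), (c j).2 * Z ^ (-(j : ℤ)))
            - 1 / (∑ j ∈ Finset.range (k + 1), (c j).1 * Z ^ (-(j : ℤ)))))
      =o[atTop] fun Z : ℝ => Z ^ (-(k : ℤ)))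


private noncomputable def pS (a : ℕ → ℝ) (k : ℕ) (x : ℝ) : ℝ := ∑ j ∈ Finset.range (k+1), a j * x ^ j
private noncomputable def dS (a : ℕ → ℝ) (k : ℕ) (x : ℝ) : ℝ :=
  ∑ j ∈ Finset.range (k+1), -(j:ℝ) * a j * x ^ (j+1)

private noncomputable def G1 (c : ℕ → ℝ × ℝ) (k : ℕ) (x : ℝ) : ℝ :=
  dS (fun j => (c j).1) k x -
    (-Real.tan (pS (fun j => (c j).2) k x) + pS (fun j => (c j).1) k x * x / 2)

private noncomputable def G2 (n : ℕ) (c : ℕ → ℝ × ℝ) (k : ℕ) (x : ℝ) : ℝ :=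
  dS (fun j => (c j).2) k x -
    ((n : ℝ) - 1) * (1 / Real.cos (pS (fun j => (c j).2) k x) - 1 / pS (fun j => (c j).1) k x)

private noncomputable def Res1 (c : ℕ → ℝ × ℝ) (k : ℕ) (Z : ℝ) : ℝ :=
  (∑ j ∈ Finset.range (k + 1), -(j : ℝ) * (c j).1 * Z ^ (-(j : ℤ) - 1))
    - (-Real.tan (∑ j ∈ Finset.range (k + 1), (c j).2 * Z ^ (-(j : ℤ)))
        + (∑ j ∈ Finset.range (k + 1), (c j).1 * Z ^ (-(j : ℤ))) / (2 * Z))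

private noncomputable def Res2 (n : ℕ) (c : ℕ → ℝ × ℝ) (k : ℕ) (Z : ℝ) : ℝ :=
  (∑ j ∈ Finset.range (k + 1), -(j : ℝ) * (c j).2 * Z ^ (-(j : ℤ) - 1))
    - ((n : ℝ) - 1) * (1 / Real.cos (∑ j ∈ Finset.range (k + 1), (c j).2 * Z ^ (-(j : ℤ)))
        - 1 / (∑ j ∈ Finset.range (k + 1), (c j).1 * Z ^ (-(j : ℤ))))

private lemma zpow_natneg (Z : ℝ) (j : ℕ) : Z ^ (-(j:ℤ)) = (Z⁻¹) ^ j := by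
  rw [zpow_neg, zpow_natCast, inv_pow]

private lemma zpow_natneg' (Z : ℝ) (j : ℕ) : Z ^ (-(j:ℤ) - 1) = (Z⁻¹) ^ (j+1) := by
  have : -(j:ℤ) - 1 = -((j+1:ℕ):ℤ) := by push_cast; ring
  rw [this, zpow_natneg]

private lemma pS_eq (a : ℕ → ℝ) (k : ℕ) (Z : ℝ) :
    (∑ j ∈ Finset.range (k + 1), a j * Z ^ (-(j : ℤ))) = pS a k Z⁻¹ := by
  refine Finset.sum_congr rfl fun j _ => ?_
  rw [zpow_natneg]

private lemma dS_eq (a : ℕ → ℝ) (k : ℕ) (Z : ℝ) :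
    (∑ j ∈ Finset.range (k + 1), -(j:ℝ) * a j * Z ^ (-(j : ℤ) - 1)) = dS a k Z⁻¹ := by
  refine Finset.sum_congr rfl fun j _ => ?_
  rw [zpow_natneg']

private lemma Res1_eq (c : ℕ → ℝ × ℝ) (k : ℕ) (Z : ℝ) : Res1 c k Z = G1 c k Z⁻¹ := by
  unfold Res1 G1
  rw [dS_eq, pS_eq, pS_eq]
  congr 1
  congr 1
  rw [div_eq_mul_inv, mul_inv, mul_div_assoc]
  ring

private lemma Res2_eq (n : ℕ) (c : ℕ → ℝ × ℝ) (k : ℕ) (Z : ℝ) :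
    Res2 n c k Z = G2 n c k Z⁻¹ := by
  unfold Res2 G2
  rw [dS_eq, pS_eq, pS_eq]

private lemma pS_zero (a : ℕ → ℝ) (k : ℕ) : pS a k 0 = a 0 := by
  unfold pS
  rw [Finset.sum_eq_single 0]
  · simp
  · intro j _ hj; simp [zero_pow hj]
  · intro h; simp at h

private lemma pS_an (a : ℕ → ℝ) (k : ℕ) (x : ℝ) : AnalyticAt ℝ (pS a k) x := by
  unfold pS
  exact Finset.analyticAt_fun_sum _ fun j _ => analyticAt_const.mul ((analyticAt_id (𝕜 := ℝ) (z := x)).pow j)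

private lemma dS_an (a : ℕ → ℝ) (k : ℕ) (x : ℝ) : AnalyticAt ℝ (dS a k) x := by
  unfold dS
  exact Finset.analyticAt_fun_sum _ fun j _ => analyticAt_const.mul ((analyticAt_id (𝕜 := ℝ) (z := x)).pow (j+1))

private lemma G1_an (c : ℕ → ℝ × ℝ) (k : ℕ) (hθ : Real.cos (c 0).2 ≠ 0) :
    AnalyticAt ℝ (G1 c k) 0 := by
  unfold G1
  refine (dS_an _ _ _).sub (((rtan_an ?_).comp (pS_an _ _ _)).neg.add
    (((pS_an _ _ _).mul analyticAt_id).div analyticAt_const (by norm_num)))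
  rwa [pS_zero]

private lemma G2_an (n : ℕ) (c : ℕ → ℝ × ℝ) (k : ℕ) (hθ : Real.cos (c 0).2 ≠ 0)
    (hR : (c 0).1 ≠ 0) : AnalyticAt ℝ (G2 n c k) 0 := by
  unfold G2
  refine (dS_an _ _ _).sub (analyticAt_const.mul (AnalyticAt.sub ?_ ?_))
  · refine analyticAt_const.div ((rcos_an _).comp (pS_an _ _ _)) ?_
    show Real.cos (pS _ k 0) ≠ 0
    rwa [pS_zero]
  · refine analyticAt_const.div (pS_an _ _ _) ?_
    rwa [pS_zero]

private noncomputable def reflc (c : ℕ → ℝ × ℝ) : ℕ → ℝ × ℝ :=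
  fun j => ((-1:ℝ) ^ j * (c j).1, (-1:ℝ) ^ (j+1) * (c j).2)

private lemma pS_refl1 (c : ℕ → ℝ × ℝ) (k : ℕ) (x : ℝ) :
    pS (fun j => (reflc c j).1) k x = pS (fun j => (c j).1) k (-x) := by
  unfold pS reflc
  refine Finset.sum_congr rfl fun j _ => ?_
  rw [neg_pow]; ring

private lemma pS_refl2 (c : ℕ → ℝ × ℝ) (k : ℕ) (x : ℝ) :
    pS (fun j => (reflc c j).2) k x = -pS (fun j => (c j).2) k (-x) := by
  unfold pS reflc
  rw [← Finset.sum_neg_distrib]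
  refine Finset.sum_congr rfl fun j _ => ?_
  rw [neg_pow]; ring

private lemma dS_refl1 (c : ℕ → ℝ × ℝ) (k : ℕ) (x : ℝ) :
    dS (fun j => (reflc c j).1) k x = -dS (fun j => (c j).1) k (-x) := by
  unfold dS reflc
  rw [← Finset.sum_neg_distrib]
  refine Finset.sum_congr rfl fun j _ => ?_
  rw [neg_pow]; ring

private lemma dS_refl2 (c : ℕ → ℝ × ℝ) (k : ℕ) (x : ℝ) :
    dS (fun j => (reflc c j).2) k x = dS (fun j => (c j).2) k (-x) := by
  unfold dS reflc
  refine Finset.sum_congr rfl fun j _ => ?_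
  rw [neg_pow (x) (j+1)]; ring

private lemma G1_refl (c : ℕ → ℝ × ℝ) (k : ℕ) (x : ℝ) :
    G1 (reflc c) k x = -G1 c k (-x) := by
  unfold G1
  rw [dS_refl1, pS_refl1, pS_refl2, Real.tan_neg]
  ring

private lemma G2_refl (n : ℕ) (c : ℕ → ℝ × ℝ) (k : ℕ) (x : ℝ) :
    G2 n (reflc c) k x = G2 n c k (-x) := by
  unfold G2
  rw [dS_refl2, pS_refl1, pS_refl2, Real.cos_neg]

private lemma Res1_refl (c : ℕ → ℝ × ℝ) (k : ℕ) (Z : ℝ) :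
    Res1 (reflc c) k Z = -Res1 c k (-Z) := by
  rw [Res1_eq, Res1_eq, G1_refl, ← inv_neg]

private lemma Res2_refl (n : ℕ) (c : ℕ → ℝ × ℝ) (k : ℕ) (Z : ℝ) :
    Res2 n (reflc c) k Z = Res2 n c k (-Z) := by
  rw [Res2_eq, Res2_eq, G2_refl, ← inv_neg]

private lemma negpow_bigO (k : ℕ) :
    (fun Z : ℝ => (-Z) ^ (-(k:ℤ))) =O[atTop] fun Z : ℝ => Z ^ (-(k:ℤ)) := by
  refine IsBigO.of_bound 1 ?_
  filter_upwards with Z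
  rw [one_mul, Real.norm_eq_abs, Real.norm_eq_abs, zpow_neg, zpow_neg, abs_inv, abs_inv,
    zpow_natCast, zpow_natCast, abs_pow, abs_pow, abs_neg]

private lemma res_atBot {f g : ℝ → ℝ} {k : ℕ}
    (hfg : ∀ Z, f Z = g Z⁻¹) (hg : AnalyticAt ℝ g 0)
    (ho : f =o[atTop] fun Z : ℝ => Z ^ (-(k:ℤ))) :
    f =o[atBot] fun Z : ℝ => Z ^ (-(k:ℤ)) := by
  have h1 : (fun Z : ℝ => g Z⁻¹) =o[atTop] fun Z : ℝ => Z ^ (-(k:ℤ)) :=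
    ho.congr' (Filter.Eventually.of_forall fun Z => (hfg Z)) EventuallyEq.rfl
  have h2 := transfer_back g k (onesided g k hg (transfer_o g k h1))
  exact h2.congr' (Filter.Eventually.of_forall fun Z => (hfg Z).symm) EventuallyEq.rfl

private lemma refl_formal (n : ℕ) (c : ℕ → ℝ × ℝ)
    (hθ : Real.cos (c 0).2 ≠ 0) (hR : (c 0).1 ≠ 0)
    (hc : IsFormalSolution n c) : IsFormalSolution n (reflc c) := by
  intro k
  obtain ⟨hc1, hc2⟩ := hc k
  have hc1' : Res1 c k =o[atBot] fun Z : ℝ => Z ^ (-(k:ℤ)) :=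
    res_atBot (fun Z => Res1_eq c k Z) (G1_an c k hθ) hc1
  have hc2' : Res2 n c k =o[atBot] fun Z : ℝ => Z ^ (-(k:ℤ)) :=
    res_atBot (fun Z => Res2_eq n c k Z) (G2_an n c k hθ hR) hc2
  have hneg : Tendsto (fun Z : ℝ => -Z) atTop atBot := tendsto_neg_atTop_atBot
  constructor
  · show Res1 (reflc c) k =o[atTop] fun Z : ℝ => Z ^ (-(k:ℤ))
    have := (Asymptotics.isLittleO_neg_left.mpr ((hc1'.comp_tendsto hneg))).trans_isBigO (negpow_bigO k)
    refine this.congr' ?_ EventuallyEq.rfl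
    filter_upwards with Z
    exact (Res1_refl c k Z).symm
  · show Res2 n (reflc c) k =o[atTop] fun Z : ℝ => Z ^ (-(k:ℤ))
    have := (hc2'.comp_tendsto hneg).trans_isBigO (negpow_bigO k)
    refine this.congr' ?_ EventuallyEq.rfl
    filter_upwards with Z
    exact (Res2_refl n c k Z).symm

private lemma sum_diff (x y : ℕ → ℝ) (m : ℕ) (h : ∀ j, j < m + 1 → x j = y j) (Z : ℝ) :
    (∑ j ∈ Finset.range (m+1+1), x j * Z ^ (-(j:ℤ)))
      - (∑ j ∈ Finset.range (m+1+1), y j * Z ^ (-(j:ℤ)))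
      = (x (m+1) - y (m+1)) * Z ^ (-((m+1:ℕ):ℤ)) := by
  rw [← Finset.sum_sub_distrib, Finset.sum_eq_single (m+1)]
  · ring
  · intro j hj hne
    rw [h j (by simp only [Finset.mem_range] at hj; omega)]; ring
  · intro h'; exact absurd (Finset.self_mem_range_succ (m+1)) h'

private lemma dsum_diff (x y : ℕ → ℝ) (m : ℕ) (h : ∀ j, j < m + 1 → x j = y j) (Z : ℝ) :
    (∑ j ∈ Finset.range (m+1+1), -(j:ℝ) * x j * Z ^ (-(j:ℤ) - 1))
      - (∑ j ∈ Finset.range (m+1+1), -(j:ℝ) * y j * Z ^ (-(j:ℤ) - 1))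
      = -((m+1:ℕ):ℝ) * (x (m+1) - y (m+1)) * Z ^ (-((m+1:ℕ):ℤ) - 1) := by
  rw [← Finset.sum_sub_distrib, Finset.sum_eq_single (m+1)]
  · ring
  · intro j hj hne
    rw [h j (by simp only [Finset.mem_range] at hj; omega)]; ring
  · intro h'; exact absurd (Finset.self_mem_range_succ (m+1)) h'

private lemma tan_sub_eq {x y : ℝ} (hx : Real.cos x ≠ 0) (hy : Real.cos y ≠ 0) :
    Real.tan x - Real.tan y = Real.sin (x - y) / (Real.cos x * Real.cos y) := by
  rw [Real.tan_eq_sin_div_cos, Real.tan_eq_sin_div_cos, div_sub_div _ _ hx hy, Real.sin_sub]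

private lemma keyA (c d : ℕ → ℝ × ℝ) (m : ℕ)
    (IH1 : ∀ j, j < m + 1 → (c j).1 = (d j).1) (IH2 : ∀ j, j < m + 1 → (c j).2 = (d j).2)
    (Z : ℝ) (hZ : Z ≠ 0)
    (hcu : Real.cos (∑ j ∈ Finset.range (m+1+1), (c j).2 * Z ^ (-(j:ℤ))) ≠ 0)
    (hcv : Real.cos (∑ j ∈ Finset.range (m+1+1), (d j).2 * Z ^ (-(j:ℤ))) ≠ 0) :
    Z ^ (m+1) * (Res1 c (m+1) Z - Res1 d (m+1) Z)
    = (-((m+1:ℕ):ℝ) * ((c (m+1)).1 - (d (m+1)).1)) * Z⁻¹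
      + (Z ^ (m+1) * Real.sin (((c (m+1)).2 - (d (m+1)).2) * Z ^ (-((m+1:ℕ):ℤ))))
          / (Real.cos (∑ j ∈ Finset.range (m+1+1), (c j).2 * Z ^ (-(j:ℤ)))
             * Real.cos (∑ j ∈ Finset.range (m+1+1), (d j).2 * Z ^ (-(j:ℤ))))
      - (((c (m+1)).1 - (d (m+1)).1) / 2) * Z⁻¹ := by
  have h1 : Res1 c (m+1) Z - Res1 d (m+1) Z
      = ((∑ j ∈ Finset.range (m+1+1), -(j:ℝ) * (c j).1 * Z ^ (-(j:ℤ) - 1))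
          - (∑ j ∈ Finset.range (m+1+1), -(j:ℝ) * (d j).1 * Z ^ (-(j:ℤ) - 1)))
        + (Real.tan (∑ j ∈ Finset.range (m+1+1), (c j).2 * Z ^ (-(j:ℤ)))
           - Real.tan (∑ j ∈ Finset.range (m+1+1), (d j).2 * Z ^ (-(j:ℤ))))
        - ((∑ j ∈ Finset.range (m+1+1), (c j).1 * Z ^ (-(j:ℤ)))
           - (∑ j ∈ Finset.range (m+1+1), (d j).1 * Z ^ (-(j:ℤ)))) / (2 * Z) := by
    unfold Res1; ring
  rw [h1, dsum_diff (fun j => (c j).1) (fun j => (d j).1) m IH1 Z,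
    sum_diff (fun j => (c j).1) (fun j => (d j).1) m IH1 Z,
    tan_sub_eq hcu hcv,
    sum_diff (fun j => (c j).2) (fun j => (d j).2) m IH2 Z,
    zpow_natneg Z (m+1), zpow_natneg' Z (m+1)]
  simp only [inv_pow]
  field_simp
  ring

private lemma keyB (n : ℕ) (c d : ℕ → ℝ × ℝ) (m : ℕ)
    (IH1 : ∀ j, j < m + 1 → (c j).1 = (d j).1) (IH2 : ∀ j, j < m + 2 → (c j).2 = (d j).2)
    (Z : ℝ) (hZ : Z ≠ 0)
    (hp : (∑ j ∈ Finset.range (m+1+1), (c j).1 * Z ^ (-(j:ℤ))) ≠ 0)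
    (hq : (∑ j ∈ Finset.range (m+1+1), (d j).1 * Z ^ (-(j:ℤ))) ≠ 0) :
    Z ^ (m+1) * (Res2 n c (m+1) Z - Res2 n d (m+1) Z)
    = -(((n:ℝ) - 1) * ((c (m+1)).1 - (d (m+1)).1))
        / ((∑ j ∈ Finset.range (m+1+1), (c j).1 * Z ^ (-(j:ℤ)))
           * (∑ j ∈ Finset.range (m+1+1), (d j).1 * Z ^ (-(j:ℤ)))) := by
  have e0 : (∑ j ∈ Finset.range (m+1+1), -(j:ℝ) * (c j).2 * Z ^ (-(j:ℤ) - 1))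
      = (∑ j ∈ Finset.range (m+1+1), -(j:ℝ) * (d j).2 * Z ^ (-(j:ℤ) - 1)) :=
    Finset.sum_congr rfl fun j hj => by rw [IH2 j (by exact Finset.mem_range.mp hj)]
  have e0' : (∑ j ∈ Finset.range (m+1+1), (c j).2 * Z ^ (-(j:ℤ)))
      = (∑ j ∈ Finset.range (m+1+1), (d j).2 * Z ^ (-(j:ℤ))) :=
    Finset.sum_congr rfl fun j hj => by rw [IH2 j (by exact Finset.mem_range.mp hj)]
  have h1 : Res2 n c (m+1) Z - Res2 n d (m+1) Z
      = ((n:ℝ) - 1) * ((1 / (∑ j ∈ Finset.range (m+1+1), (c j).1 * Z ^ (-(j:ℤ))))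
          - (1 / (∑ j ∈ Finset.range (m+1+1), (d j).1 * Z ^ (-(j:ℤ))))) := by
    unfold Res2
    rw [e0, e0']
    ring
  rw [h1, div_sub_div _ _ hp hq]
  have e2 : (∑ j ∈ Finset.range (m+1+1), (c j).1 * Z ^ (-(j:ℤ)))
      - (∑ j ∈ Finset.range (m+1+1), (d j).1 * Z ^ (-(j:ℤ)))
      = ((c (m+1)).1 - (d (m+1)).1) * Z ^ (-((m+1:ℕ):ℤ)) :=
    sum_diff (fun j => (c j).1) (fun j => (d j).1) m IH1 Z
  rw [show (1:ℝ) * (∑ j ∈ Finset.range (m+1+1), (d j).1 * Z ^ (-(j:ℤ)))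
      - (∑ j ∈ Finset.range (m+1+1), (c j).1 * Z ^ (-(j:ℤ))) * 1
      = -(((c (m+1)).1 - (d (m+1)).1) * Z ^ (-((m+1:ℕ):ℤ))) by rw [← neg_sub, ← e2]; ring,
    zpow_natneg Z (m+1)]
  have hone : (Z:ℝ) ^ (m+1) * (Z⁻¹) ^ (m+1) = 1 := by
    rw [← mul_pow, mul_inv_cancel₀ hZ, one_pow]
  linear_combination (((n:ℝ) - 1) * (-((c (m+1)).1 - (d (m+1)).1))
      / ((∑ j ∈ Finset.range (m+1+1), (c j).1 * Z ^ (-(j:ℤ)))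
         * (∑ j ∈ Finset.range (m+1+1), (d j).1 * Z ^ (-(j:ℤ))))) * hone

private lemma uniq (n : ℕ) (hn : 2 ≤ n) (c d : ℕ → ℝ × ℝ)
    (hcos : Real.cos (c 0).2 ≠ 0) (hR : (c 0).1 ≠ 0) (h00 : c 0 = d 0)
    (hc : IsFormalSolution n c) (hd : IsFormalSolution n d) : ∀ k, c k = d k := by
  intro k
  induction k using Nat.strong_induction_on with
  | _ k IH =>
    match k, IH with
    | 0, _ => exact h00
    | (m+1), IH =>
      have IH1 : ∀ j, j < m + 1 → (c j).1 = (d j).1 := fun j hj => by rw [IH j hj]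
      have IH2 : ∀ j, j < m + 1 → (c j).2 = (d j).2 := fun j hj => by rw [IH j hj]
      have hu : Tendsto (fun Z : ℝ => ∑ j ∈ Finset.range (m+1+1), (c j).2 * Z ^ (-(j:ℤ)))
          atTop (𝓝 (c 0).2) := sum_tendsto (fun j => (c j).2) (m+1)
      have hv : Tendsto (fun Z : ℝ => ∑ j ∈ Finset.range (m+1+1), (d j).2 * Z ^ (-(j:ℤ)))
          atTop (𝓝 (c 0).2) := by
        have := sum_tendsto (fun j => (d j).2) (m+1); rwa [← h00] at this
      have hp : Tendsto (fun Z : ℝ => ∑ j ∈ Finset.range (m+1+1), (c j).1 * Z ^ (-(j:ℤ)))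
          atTop (𝓝 (c 0).1) := sum_tendsto (fun j => (c j).1) (m+1)
      have hq : Tendsto (fun Z : ℝ => ∑ j ∈ Finset.range (m+1+1), (d j).1 * Z ^ (-(j:ℤ)))
          atTop (𝓝 (c 0).1) := by
        have := sum_tendsto (fun j => (d j).1) (m+1); rwa [← h00] at this
      have hcu : ∀ᶠ Z in atTop,
          Real.cos (∑ j ∈ Finset.range (m+1+1), (c j).2 * Z ^ (-(j:ℤ))) ≠ 0 :=
        ((Real.continuous_cos.tendsto _).comp hu).eventually_ne hcos
      have hcv : ∀ᶠ Z in atTop,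
          Real.cos (∑ j ∈ Finset.range (m+1+1), (d j).2 * Z ^ (-(j:ℤ))) ≠ 0 :=
        ((Real.continuous_cos.tendsto _).comp hv).eventually_ne hcos
      -- Step A : second components agree
      have hD1 : Tendsto
          (fun Z : ℝ => Z ^ (m+1) * (Res1 c (m+1) Z - Res1 d (m+1) Z)) atTop (𝓝 0) :=
        o_mul_tendsto (((hc (m+1)).1).sub ((hd (m+1)).1))
      have hE : Tendsto (fun Z : ℝ =>
          (-((m+1:ℕ):ℝ) * ((c (m+1)).1 - (d (m+1)).1)) * Z⁻¹
          + (Z ^ (m+1) * Real.sin (((c (m+1)).2 - (d (m+1)).2) * Z ^ (-((m+1:ℕ):ℤ))))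
              / (Real.cos (∑ j ∈ Finset.range (m+1+1), (c j).2 * Z ^ (-(j:ℤ)))
                 * Real.cos (∑ j ∈ Finset.range (m+1+1), (d j).2 * Z ^ (-(j:ℤ))))
          - (((c (m+1)).1 - (d (m+1)).1) / 2) * Z⁻¹) atTop
          (𝓝 (((c (m+1)).2 - (d (m+1)).2) / (Real.cos (c 0).2 * Real.cos (c 0).2))) := by
        have t1 : Tendsto (fun Z : ℝ =>
            (-((m+1:ℕ):ℝ) * ((c (m+1)).1 - (d (m+1)).1)) * Z⁻¹) atTop (𝓝 0) := by
          have := tendsto_inv_atTop_zero (𝕜 := ℝ) |>.const_mul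
            (-((m+1:ℕ):ℝ) * ((c (m+1)).1 - (d (m+1)).1))
          simpa using this
        have t3 : Tendsto (fun Z : ℝ => (((c (m+1)).1 - (d (m+1)).1) / 2) * Z⁻¹)
            atTop (𝓝 0) := by
          have := tendsto_inv_atTop_zero (𝕜 := ℝ) |>.const_mul (((c (m+1)).1 - (d (m+1)).1) / 2)
          simpa using this
        have t2 := (sinlim ((c (m+1)).2 - (d (m+1)).2) m).div
          (((Real.continuous_cos.tendsto _).comp hu).mul
            ((Real.continuous_cos.tendsto _).comp hv)) (mul_ne_zero hcos hcos)
        have := (t1.add t2).sub t3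
        simpa using this
      have heqA : (fun Z : ℝ => Z ^ (m+1) * (Res1 c (m+1) Z - Res1 d (m+1) Z))
          =ᶠ[atTop] (fun Z : ℝ =>
          (-((m+1:ℕ):ℝ) * ((c (m+1)).1 - (d (m+1)).1)) * Z⁻¹
          + (Z ^ (m+1) * Real.sin (((c (m+1)).2 - (d (m+1)).2) * Z ^ (-((m+1:ℕ):ℤ))))
              / (Real.cos (∑ j ∈ Finset.range (m+1+1), (c j).2 * Z ^ (-(j:ℤ)))
                 * Real.cos (∑ j ∈ Finset.range (m+1+1), (d j).2 * Z ^ (-(j:ℤ))))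
          - (((c (m+1)).1 - (d (m+1)).1) / 2) * Z⁻¹) := by
        filter_upwards [eventually_gt_atTop (0:ℝ), hcu, hcv] with Z hZ hcuZ hcvZ
        exact keyA c d m IH1 IH2 Z (ne_of_gt hZ) hcuZ hcvZ
      have hbzero : ((c (m+1)).2 - (d (m+1)).2) / (Real.cos (c 0).2 * Real.cos (c 0).2) = 0 :=
        tendsto_nhds_unique (hE.congr' heqA.symm) hD1
      have hb : (c (m+1)).2 = (d (m+1)).2 := by
        rcases div_eq_zero_iff.mp hbzero with h | h
        · exact sub_eq_zero.mp h
        · exact absurd h (mul_ne_zero hcos hcos)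
      -- Step B : first components agree
      have IH2' : ∀ j, j < m + 2 → (c j).2 = (d j).2 := by
        intro j hj
        rcases Nat.lt_or_ge j (m+1) with h | h
        · exact IH2 j h
        · have : j = m + 1 := by omega
          subst this; exact hb
      have hpne : ∀ᶠ Z in atTop,
          (∑ j ∈ Finset.range (m+1+1), (c j).1 * Z ^ (-(j:ℤ))) ≠ 0 := hp.eventually_ne hR
      have hqne : ∀ᶠ Z in atTop,
          (∑ j ∈ Finset.range (m+1+1), (d j).1 * Z ^ (-(j:ℤ))) ≠ 0 := hq.eventually_ne hR
      have hD2 : Tendsto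
          (fun Z : ℝ => Z ^ (m+1) * (Res2 n c (m+1) Z - Res2 n d (m+1) Z)) atTop (𝓝 0) :=
        o_mul_tendsto (((hc (m+1)).2).sub ((hd (m+1)).2))
      have hE2 : Tendsto (fun Z : ℝ =>
          -(((n:ℝ) - 1) * ((c (m+1)).1 - (d (m+1)).1))
            / ((∑ j ∈ Finset.range (m+1+1), (c j).1 * Z ^ (-(j:ℤ)))
               * (∑ j ∈ Finset.range (m+1+1), (d j).1 * Z ^ (-(j:ℤ))))) atTop
          (𝓝 (-(((n:ℝ) - 1) * ((c (m+1)).1 - (d (m+1)).1)) / ((c 0).1 * (c 0).1))) :=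
        tendsto_const_nhds.div (hp.mul hq) (mul_ne_zero hR hR)
      have heqB : (fun Z : ℝ => Z ^ (m+1) * (Res2 n c (m+1) Z - Res2 n d (m+1) Z))
          =ᶠ[atTop] (fun Z : ℝ =>
          -(((n:ℝ) - 1) * ((c (m+1)).1 - (d (m+1)).1))
            / ((∑ j ∈ Finset.range (m+1+1), (c j).1 * Z ^ (-(j:ℤ)))
               * (∑ j ∈ Finset.range (m+1+1), (d j).1 * Z ^ (-(j:ℤ))))) := by
        filter_upwards [eventually_gt_atTop (0:ℝ), hpne, hqne] with Z hZ hpZ hqZ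
        exact keyB n c d m IH1 IH2' Z (ne_of_gt hZ) hpZ hqZ
      have hazero : -(((n:ℝ) - 1) * ((c (m+1)).1 - (d (m+1)).1)) / ((c 0).1 * (c 0).1) = 0 :=
        tendsto_nhds_unique (hE2.congr' heqB.symm) hD2
      have ha : (c (m+1)).1 = (d (m+1)).1 := by
        rcases div_eq_zero_iff.mp hazero with h | h
        · have hn1 : ((n:ℝ) - 1) ≠ 0 := by
            have h2 : (2:ℝ) ≤ (n:ℝ) := by exact_mod_cast hn
            intro hcontra; nlinarith
          have := neg_eq_zero.mp h
          rcases mul_eq_zero.mp this with h' | h'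
          · exact absurd h' hn1
          · exact sub_eq_zero.mp h'
        · exact absurd h (mul_ne_zero hR hR)
      exact Prod.ext ha hb

theorem formal_solution_parity (n : ℕ) (hn : 2 ≤ n) (c : ℕ → ℝ × ℝ)
    (h0R : 0 < (c 0).1) (h0θ : (c 0).2 ∈ Set.Ioo (-(π / 2)) (π / 2))
    (hc : IsFormalSolution n c) :
    (∀ k : ℕ, Odd k → (c k).1 = 0) ∧ (∀ k : ℕ, Even k → (c k).2 = 0) := by
  have hcos : Real.cos (c 0).2 ≠ 0 :=
    ne_of_gt (Real.cos_pos_of_mem_Ioo h0θ)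
  have hRne : (c 0).1 ≠ 0 := ne_of_gt h0R
  -- Step 1 : (c 0).2 = 0
  have hθ0 : (c 0).2 = 0 := by
    have h := (hc 0).1
    have hev : ∀ Z : ℝ,
        ((∑ j ∈ Finset.range (0 + 1), -(j : ℝ) * (c j).1 * Z ^ (-(j : ℤ) - 1))
          - (-Real.tan (∑ j ∈ Finset.range (0 + 1), (c j).2 * Z ^ (-(j : ℤ)))
              + (∑ j ∈ Finset.range (0 + 1), (c j).1 * Z ^ (-(j : ℤ))) / (2 * Z)))
        = Real.tan (c 0).2 - (c 0).1 / (2 * Z) := by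
      intro Z
      simp [Finset.sum_range_one]
      ring
    have h' : (fun Z : ℝ => Real.tan (c 0).2 - (c 0).1 / (2 * Z)) =o[atTop]
        (fun _ : ℝ => (1:ℝ)) := by
      refine h.congr' (Filter.Eventually.of_forall hev) (Filter.Eventually.of_forall ?_)
      intro Z; simp
    have h1 : Tendsto (fun Z : ℝ => Real.tan (c 0).2 - (c 0).1 / (2 * Z)) atTop (𝓝 0) :=
      (Asymptotics.isLittleO_one_iff ℝ).mp h'
    have h2 : Tendsto (fun Z : ℝ => (c 0).1 / (2 * Z)) atTop (𝓝 0) := by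
      refine tendsto_const_nhds.div_atTop ?_
      exact (tendsto_id (α := ℝ)).const_mul_atTop (by norm_num)
    have h3 : Tendsto (fun _ : ℝ => Real.tan (c 0).2) atTop (𝓝 0) := by
      have := h1.add h2
      simpa using this
    have htan0 : Real.tan (c 0).2 = 0 := tendsto_nhds_unique tendsto_const_nhds h3
    have hz : (0:ℝ) ∈ Set.Ioo (-(π / 2)) (π / 2) := by
      constructor
      · linarith [Real.pi_div_two_pos]
      · exact Real.pi_div_two_pos
    exact Real.injOn_tan ⟨h0θ.1, h0θ.2⟩ hz (by rw [htan0, Real.tan_zero])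
  -- Step 2 : the reflected sequence is also a formal solution agreeing at order 0
  have hd : IsFormalSolution n (reflc c) := refl_formal n c hcos hRne hc
  have h00 : c 0 = reflc c 0 := by
    have h1 : (c 0).1 = (reflc c 0).1 := by simp [reflc]
    have h2 : (c 0).2 = (reflc c 0).2 := by simp [reflc, hθ0]
    exact Prod.ext h1 h2
  have huniq : ∀ k, c k = reflc c k := uniq n hn c (reflc c) hcos hRne h00 hc hd
  constructor
  · intro k hk
    have h1 : (c k).1 = (-1:ℝ) ^ k * (c k).1 := by
      conv_lhs => rw [huniq k]
      rfl
    rw [hk.neg_one_pow] at h1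
    linarith [h1]
  · intro k hk
    have h2 : (c k).2 = (-1:ℝ) ^ (k+1) * (c k).2 := by
      conv_lhs => rw [huniq k]
      rfl
    have hodd : Odd (k+1) := Even.add_one hk
    rw [hodd.neg_one_pow] at h2
    linarith [h2]
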